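/- arXiv:2110.01216 — 7 statements merged into one kernel-verified Lean document; each statement's English description precedes it below -/
import Mathlib

section
/- Let n be a natural number, G a square n×n matrix with entries in RatFunc ℂ, and let E, F be invertible n×n matrices over ℂ, regarded as matrices of constant rational functions via the entrywise embedding ℂ → RatFunc ℂ. Define G₂ := F⁻¹ · G · E⁻¹ (a matrix over RatFunc ℂ). Then for every a ∈ ℂ, a is a pole of G₂ if and only if a is a pole of G. -/
open Matrix

/-- `a` is a pole of a matrix of rational functions if some entry, written in
lowest terms, has denominator vanishing at `a`. -/
def Matrix.IsPoleAt {n : ℕ} (G : Matrix (Fin n) (Fin n) (RatFunc ℂ)) (a : ℂ) : Prop :=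
  ∃ i j, ((G i j).denom).eval a = 0

namespace PoleAux

/-- `f` is regular at `a`. -/
def Reg (a : ℂ) (f : RatFunc ℂ) : Prop := f.denom.eval a ≠ 0

lemma reg_of_dvd {a : ℂ} {f g h : RatFunc ℂ} (hd : f.denom ∣ g.denom * h.denom)
    (hg : Reg a g) (hh : Reg a h) : Reg a f := by
  intro h0
  obtain ⟨c, hc⟩ := hd
  apply mul_ne_zero hg hh
  have := congrArg (Polynomial.eval a) hc
  simp [h0] at this
  simpa [Polynomial.eval_mul] using this

lemma reg_add {a : ℂ} {f g : RatFunc ℂ} (hf : Reg a f) (hg : Reg a g) :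
    Reg a (f + g) := reg_of_dvd (RatFunc.denom_add_dvd f g) hf hg

lemma reg_mul {a : ℂ} {f g : RatFunc ℂ} (hf : Reg a f) (hg : Reg a g) :
    Reg a (f * g) := reg_of_dvd (RatFunc.denom_mul_dvd f g) hf hg

lemma reg_C (a : ℂ) (c : ℂ) : Reg a (RatFunc.C c) := by
  simp [Reg, RatFunc.denom_C]

lemma reg_zero (a : ℂ) : Reg a (0 : RatFunc ℂ) := by
  simp [Reg, RatFunc.denom_zero]

lemma reg_sum {a : ℂ} {ι : Type*} (s : Finset ι) (f : ι → RatFunc ℂ)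
    (h : ∀ i ∈ s, Reg a (f i)) : Reg a (∑ i ∈ s, f i) := by
  classical
  induction s using Finset.induction_on with
  | empty => simpa using reg_zero a
  | insert _ _ hx ih =>
    rw [Finset.sum_insert hx]
    exact reg_add (h _ (Finset.mem_insert_self _ _))
      (ih fun i hi => h i (Finset.mem_insert_of_mem hi))

lemma sandwich {n : ℕ} {G : Matrix (Fin n) (Fin n) (RatFunc ℂ)} {a : ℂ}
    (hG : ¬ G.IsPoleAt a) (A B : Matrix (Fin n) (Fin n) ℂ) :
    ¬ (A.map (RatFunc.C : ℂ →+* RatFunc ℂ) * G *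
        B.map (RatFunc.C : ℂ →+* RatFunc ℂ)).IsPoleAt a := by
  simp only [Matrix.IsPoleAt, not_exists] at hG ⊢
  intro i j
  have hentry : (A.map (RatFunc.C : ℂ →+* RatFunc ℂ) * G *
      B.map (RatFunc.C : ℂ →+* RatFunc ℂ)) i j =
      ∑ l, ∑ k, RatFunc.C (A i k) * G k l * RatFunc.C (B l j) := by
    simp [Matrix.mul_apply, Finset.sum_mul, Matrix.map_apply]
  rw [hentry]
  refine reg_sum _ _ fun l _ => reg_sum _ _ fun k _ => ?_
  exact reg_mul (reg_mul (reg_C a _) (hG k l)) (reg_C a _)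

end PoleAux

theorem stmt_1 {n : ℕ} (G : Matrix (Fin n) (Fin n) (RatFunc ℂ))
    (E F : Matrix (Fin n) (Fin n) ℂ) (hE : IsUnit E) (hF : IsUnit F) :
    ∀ a : ℂ,
      ((F.map (RatFunc.C : ℂ →+* RatFunc ℂ))⁻¹ * G *
        (E.map (RatFunc.C : ℂ →+* RatFunc ℂ))⁻¹).IsPoleAt a ↔ G.IsPoleAt a := by
  intro a
  set C : ℂ →+* RatFunc ℂ := RatFunc.C
  have hFmap : (F.map C)⁻¹ = F⁻¹.map C := by
    apply Matrix.inv_eq_right_inv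
    have : (F * F⁻¹).map C = (1 : Matrix (Fin n) (Fin n) ℂ).map C := by
      rw [Matrix.mul_nonsing_inv F ((Matrix.isUnit_iff_isUnit_det F).mp hF)]
    rw [Matrix.map_mul] at this
    simpa using this
  have hEmap : (E.map C)⁻¹ = E⁻¹.map C := by
    apply Matrix.inv_eq_right_inv
    have : (E * E⁻¹).map C = (1 : Matrix (Fin n) (Fin n) ℂ).map C := by
      rw [Matrix.mul_nonsing_inv E ((Matrix.isUnit_iff_isUnit_det E).mp hE)]
    rw [Matrix.map_mul] at this
    simpa using this
  constructor
  · intro h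
    by_contra hG
    exact (PoleAux.sandwich hG F⁻¹ E⁻¹) (by rwa [hFmap, hEmap] at h)
  · intro h
    by_contra hG2
    apply (PoleAux.sandwich hG2 F E)
    have key : F.map C * ((F.map C)⁻¹ * G * (E.map C)⁻¹) * E.map C = G := by
      have hFu : F.map C * (F.map C)⁻¹ = 1 := by
        rw [hFmap, ← Matrix.map_mul,
          Matrix.mul_nonsing_inv F ((Matrix.isUnit_iff_isUnit_det F).mp hF)]
        simp
      have hEu : (E.map C)⁻¹ * E.map C = 1 := by
        rw [hEmap, ← Matrix.map_mul,
          Matrix.nonsing_inv_mul E ((Matrix.isUnit_iff_isUnit_det E).mp hE)]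
        simp
      calc F.map C * ((F.map C)⁻¹ * G * (E.map C)⁻¹) * E.map C
          = (F.map C * (F.map C)⁻¹) * G * ((E.map C)⁻¹ * E.map C) := by
            noncomm_ring
        _ = G := by rw [hFu, hEu]; simp
    rwa [key]
end

section
/- Let k_pf > 0, k_qv > 0 and τ > 0 be real numbers. For a nonzero real Ω, define the 2×2 complex matrix N(Ω) = [[(1 + iΩτ)/(iΩ·k_pf), 0], [0, 1/k_qv]]. Then (i) for every real Ω ≠ 0, N(Ω) + N(Ω)^H = [[2τ/k_pf, 0], [0, 2/k_qv]], and this matrix is positive semidefinite; and (ii) the residue at the pole s = 0, namely the limit as s → 0 (s ∈ ℂ, s ≠ 0) of s·[[(1 + sτ)/(s·k_pf), 0], [0, 1/k_qv]], equals [[1/k_pf, 0], [0, 0]], which is a positive semidefinite Hermitian matrix. -/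
open Matrix Filter Topology ComplexOrder

lemma diag2_psd (a b : ℝ) (ha : 0 ≤ a) (hb : 0 ≤ b) :
    (!![(a : ℂ), 0; 0, (b : ℂ)] : Matrix (Fin 2) (Fin 2) ℂ).PosSemidef := by
  rw [Matrix.posSemidef_iff_dotProduct_mulVec]
  constructor
  · ext i j
    fin_cases i <;> fin_cases j <;>
      simp [Matrix.conjTranspose_apply]
  · intro x
    have hx : (star x) ⬝ᵥ ((!![(a : ℂ), 0; 0, (b : ℂ)]) *ᵥ x)
        = ((a * Complex.normSq (x 0) + b * Complex.normSq (x 1) : ℝ) : ℂ) := by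
      simp [dotProduct, Matrix.mulVec, Fin.sum_univ_two,
        Complex.normSq_eq_conj_mul_self]
      push_cast
      ring
    rw [hx]
    exact_mod_cast Complex.zero_le_real.2
      (add_nonneg (mul_nonneg ha (Complex.normSq_nonneg _))
        (mul_nonneg hb (Complex.normSq_nonneg _)))

theorem stmt_3 (kpf kqv τ : ℝ) (hkpf : 0 < kpf) (hkqv : 0 < kqv) (hτ : 0 < τ) :
    (∀ Ω : ℝ, Ω ≠ 0 →
      (!![(1 + Complex.I * Ω * τ) / (Complex.I * Ω * kpf), 0; 0, 1 / (kqv : ℂ)] +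
        (!![(1 + Complex.I * Ω * τ) / (Complex.I * Ω * kpf), 0; 0, 1 / (kqv : ℂ)])ᴴ
          = !![(2 * τ / kpf : ℂ), 0; 0, (2 / kqv : ℂ)]) ∧
      (!![(2 * τ / kpf : ℂ), 0; 0, (2 / kqv : ℂ)] : Matrix (Fin 2) (Fin 2) ℂ).PosSemidef) ∧
    Tendsto
      (fun s : ℂ => s • (!![(1 + s * τ) / (s * kpf), 0; 0, 1 / (kqv : ℂ)] :
        Matrix (Fin 2) (Fin 2) ℂ))
      (𝓝[≠] 0) (𝓝 !![(1 / kpf : ℂ), 0; 0, 0]) ∧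
    (!![(1 / kpf : ℂ), 0; 0, 0] : Matrix (Fin 2) (Fin 2) ℂ).PosSemidef ∧
    (!![(1 / kpf : ℂ), 0; 0, 0] : Matrix (Fin 2) (Fin 2) ℂ).IsHermitian := by
  have hkpf' : (kpf : ℂ) ≠ 0 := by exact_mod_cast hkpf.ne'
  have hkqv' : (kqv : ℂ) ≠ 0 := by exact_mod_cast hkqv.ne'
  refine ⟨fun Ω hΩ => ⟨?_, ?_⟩, ?_, ?_, ?_⟩
  · have hΩ' : (Ω : ℂ) ≠ 0 := by exact_mod_cast hΩ
    have hI : Complex.I ≠ 0 := Complex.I_ne_zero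
    ext i j
    have hz : Complex.I * Ω * kpf ≠ 0 := by
      simp [hΩ', hkpf', Complex.I_ne_zero]
    fin_cases i <;> fin_cases j <;>
      simp only [Matrix.conjTranspose_apply, Matrix.add_apply, Matrix.cons_val_zero,
        Matrix.cons_val_one, Matrix.head_cons, Matrix.head_fin_const, Matrix.cons_val_fin_one,
        map_div₀, map_add, _root_.map_mul, _root_.map_one, Complex.conj_I, Complex.conj_ofReal,
        Matrix.cons_val', Matrix.empty_val', Matrix.cons_val_fin_one] <;>
      [skip; simp; simp; skip]
    all_goals field_simp
    all_goals try ring_nf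
    all_goals try simp [Complex.I_sq]
    all_goals try norm_num
    · field_simp
      ring_nf
      simp [Complex.I_sq]
    · ring
  · have h1 : ((2 * τ / kpf : ℂ)) = ((2 * τ / kpf : ℝ) : ℂ) := by push_cast; ring
    have h2 : ((2 / kqv : ℂ)) = ((2 / kqv : ℝ) : ℂ) := by push_cast; ring
    rw [h1, h2]
    exact diag2_psd _ _ (by positivity) (by positivity)
  · have heq : ∀ s : ℂ, s ≠ 0 →
        s • (!![(1 + s * τ) / (s * kpf), 0; 0, 1 / (kqv : ℂ)] :
          Matrix (Fin 2) (Fin 2) ℂ)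
        = !![(1 + s * τ) / kpf, 0; 0, s / kqv] := by
      intro s hs
      ext i j
      fin_cases i <;> fin_cases j <;> simp [Matrix.smul_apply] <;> field_simp <;> ring
    have hg : Tendsto (fun s : ℂ => (!![(1 + s * τ) / kpf, 0; 0, s / kqv] :
        Matrix (Fin 2) (Fin 2) ℂ)) (𝓝 0) (𝓝 !![(1 / kpf : ℂ), 0; 0, 0]) := by
      have hc : Continuous (fun s : ℂ => (!![(1 + s * τ) / kpf, 0; 0, s / kqv] :
          Matrix (Fin 2) (Fin 2) ℂ)) := by
        apply continuous_matrix
        intro i j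
        fin_cases i <;> fin_cases j <;> simp <;> fun_prop
      have := hc.tendsto 0
      simpa using this
    refine Tendsto.congr' ?_ (hg.mono_left nhdsWithin_le_nhds)
    filter_upwards [self_mem_nhdsWithin] with s hs
    exact (heq s hs).symm
  · have h1 : ((1 / kpf : ℂ)) = ((1 / kpf : ℝ) : ℂ) := by push_cast; ring
    have h0 : (0 : ℂ) = ((0 : ℝ) : ℂ) := by norm_num
    rw [h1]
    have := diag2_psd (1 / kpf) 0 (by positivity) le_rfl
    simpa using this
  · have h1 : ((1 / kpf : ℂ)) = ((1 / kpf : ℝ) : ℂ) := by push_cast; ring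
    rw [h1]
    have := (diag2_psd (1 / kpf) 0 (by positivity) le_rfl).1
    simpa using this
end

section
/- Let M > 0, D > 0 and c be real numbers with c < M/D². Then there exists Ω₀ > 0 such that for every real Ω with 0 < Ω < Ω₀ and for every complex number β and every real number γ, the 2×2 Hermitian matrix H(Ω) = [[2·(Re(1/(−M·Ω² + i·D·Ω)) + c), β], [conj(β), γ]] is not positive semidefinite. -/
open Matrix ComplexOrder

theorem stmt_5 (M D c : ℝ) (hM : 0 < M) (hD : 0 < D) (hc : c < M / D ^ 2) :
    ∃ Ω₀ > (0 : ℝ), ∀ Ω : ℝ, 0 < Ω → Ω < Ω₀ → ∀ β : ℂ, ∀ γ : ℝ,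
      ¬ (!![(2 * ((1 / (-(M : ℂ) * Ω ^ 2 + Complex.I * D * Ω)).re + c) : ℂ), β;
            (starRingEnd ℂ) β, (γ : ℂ)] : Matrix (Fin 2) (Fin 2) ℂ).PosSemidef := by
  have hD2 : (0:ℝ) < D ^ 2 := by positivity
  have hcd : c * D ^ 2 < M := by
    have := (lt_div_iff₀ hD2).mp hc
    linarith
  have hnum : 0 < M * D ^ 2 - c * D ^ 4 := by nlinarith
  refine ⟨Real.sqrt ((M * D ^ 2 - c * D ^ 4) / M ^ 3), Real.sqrt_pos.mpr (by positivity), ?_⟩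
  intro Ω hΩ hΩlt β γ hPSD
  have hΩsq : Ω ^ 2 < (M * D ^ 2 - c * D ^ 4) / M ^ 3 := by
    have h := Real.sq_sqrt (le_of_lt (show (0:ℝ) < (M * D ^ 2 - c * D ^ 4) / M ^ 3 by positivity))
    nlinarith [Real.sqrt_nonneg ((M * D ^ 2 - c * D ^ 4) / M ^ 3)]
  have hA : Ω ^ 2 * M ^ 3 < M * D ^ 2 - c * D ^ 4 := (lt_div_iff₀ (by positivity)).mp hΩsq
  set z : ℂ := -(M : ℂ) * Ω ^ 2 + Complex.I * D * Ω with hz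
  -- the (0,0) entry is nonnegative
  have h00 := hPSD.dotProduct_mulVec_nonneg (Pi.single 0 1)
  have hentry : ((0 : ℝ) : ℂ) ≤ ((2 * ((1 / z).re + c) : ℝ) : ℂ) := by
    push_cast
    simpa [dotProduct, mulVec, Fin.sum_univ_two, Pi.single_apply] using h00
  have hre : (0 : ℝ) ≤ 2 * ((1 / z).re + c) := by
    exact_mod_cast hentry
  -- compute the real part
  have hzeq : z = Complex.ofReal (-(M * Ω ^ 2)) + Complex.I * Complex.ofReal (D * Ω) := by
    rw [hz]; push_cast; ring
  have hzre : z.re = -(M * Ω ^ 2) := by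
    rw [hzeq, Complex.add_re, Complex.ofReal_re, Complex.mul_re, Complex.I_re, Complex.I_im,
      Complex.ofReal_re, Complex.ofReal_im]; ring
  have hzim : z.im = D * Ω := by
    rw [hzeq, Complex.add_im, Complex.ofReal_im, Complex.mul_im, Complex.I_re, Complex.I_im,
      Complex.ofReal_re, Complex.ofReal_im]; ring
  have hns : Complex.normSq z = (M * Ω ^ 2) ^ 2 + (D * Ω) ^ 2 := by
    rw [Complex.normSq_apply, hzre, hzim]; ring
  have hre2 : (1 / z).re = -(M * Ω ^ 2) / ((M * Ω ^ 2) ^ 2 + (D * Ω) ^ 2) := by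
    rw [one_div, Complex.inv_re, hzre, hns]
  rw [hre2] at hre
  have hden : 0 < (M * Ω ^ 2) ^ 2 + (D * Ω) ^ 2 := by positivity
  have key : -(M * Ω ^ 2) / ((M * Ω ^ 2) ^ 2 + (D * Ω) ^ 2) + c < 0 := by
    rw [div_add' _ _ _ (ne_of_gt hden), div_neg_iff]
    right
    refine ⟨?_, hden⟩
    rcases le_or_gt c 0 with hcle | hcpos
    · nlinarith [mul_nonpos_of_nonpos_of_nonneg hcle hden.le, mul_pos hM (mul_pos hΩ hΩ)]
    · have h1 := mul_lt_mul_of_pos_left hA (by positivity : (0:ℝ) < c * Ω ^ 2)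
      have h2 : 0 ≤ Ω ^ 2 * (M - c * D ^ 2) ^ 2 := by positivity
      nlinarith [h1, h2, mul_pos hM (mul_pos hΩ hΩ), hM]
  linarith
end

section
/- Let v_D, v_Q, i_D, i_Q and d be real numbers. Define the 2×2 real matrices 𝓔 = [[v_D, v_Q], [−v_Q, v_D]], 𝓒 = [[i_D, i_Q], [i_Q, −i_D]], 𝓕 = [[v_Q, v_D], [−v_D, v_Q]] (row-major), and D_j := (d·𝓔 + 𝓒)·𝓕. Then D_j + D_jᵀ = 2·[[i_D·v_Q − i_Q·v_D, i_D·v_D + i_Q·v_Q], [i_D·v_D + i_Q·v_Q, −(i_D·v_Q − i_Q·v_D)]]; in particular trace(D_j + D_jᵀ) = 0, and if (i_D·v_D + i_Q·v_Q, i_D·v_Q − i_Q·v_D) ≠ (0, 0) then D_j + D_jᵀ is not positive semidefinite. -/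
open Matrix

theorem stmt_7 (vD vQ iD iQ d : ℝ) :
    ((d • !![vD, vQ; -vQ, vD] + !![iD, iQ; iQ, -iD]) * !![vQ, vD; -vD, vQ] +
      ((d • !![vD, vQ; -vQ, vD] + !![iD, iQ; iQ, -iD]) * !![vQ, vD; -vD, vQ])ᵀ
        = (2 : ℝ) • !![iD * vQ - iQ * vD, iD * vD + iQ * vQ;
                       iD * vD + iQ * vQ, -(iD * vQ - iQ * vD)]) ∧
    (((d • !![vD, vQ; -vQ, vD] + !![iD, iQ; iQ, -iD]) * !![vQ, vD; -vD, vQ] +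
      ((d • !![vD, vQ; -vQ, vD] + !![iD, iQ; iQ, -iD]) * !![vQ, vD; -vD, vQ])ᵀ).trace = 0) ∧
    ((iD * vD + iQ * vQ, iD * vQ - iQ * vD) ≠ (0, 0) →
      ¬ ((d • !![vD, vQ; -vQ, vD] + !![iD, iQ; iQ, -iD]) * !![vQ, vD; -vD, vQ] +
        ((d • !![vD, vQ; -vQ, vD] + !![iD, iQ; iQ, -iD]) * !![vQ, vD; -vD, vQ])ᵀ).PosSemidef) := by
  have key : (d • !![vD, vQ; -vQ, vD] + !![iD, iQ; iQ, -iD]) * !![vQ, vD; -vD, vQ] +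
      ((d • !![vD, vQ; -vQ, vD] + !![iD, iQ; iQ, -iD]) * !![vQ, vD; -vD, vQ])ᵀ
        = (2 : ℝ) • !![iD * vQ - iQ * vD, iD * vD + iQ * vQ;
                       iD * vD + iQ * vQ, -(iD * vQ - iQ * vD)] := by
    ext i j
    fin_cases i <;> fin_cases j <;>
      simp [Matrix.mul_apply, Fin.sum_univ_succ, Matrix.smul_apply, Matrix.add_apply, Matrix.transpose_apply, Matrix.vecHead, Matrix.vecTail] <;> ring
  refine ⟨key, ?_, ?_⟩
  · rw [key]
    simp [Matrix.trace_fin_two]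
    ring
  · intro hne hpsd
    rw [key] at hpsd
    set a := iD * vQ - iQ * vD with ha
    set b := iD * vD + iQ * vQ with hb
    have h1 := hpsd.dotProduct_mulVec_nonneg ![1, 0]
    have h2 := hpsd.dotProduct_mulVec_nonneg ![0, 1]
    have h3 := hpsd.dotProduct_mulVec_nonneg ![1, 1]
    have h4 := hpsd.dotProduct_mulVec_nonneg ![1, -1]
    simp [Matrix.mulVec, dotProduct, Fin.sum_univ_succ] at h1 h2 h3 h4
    have haz : a = 0 := le_antisymm (by nlinarith) (by nlinarith)
    have hbz : b = 0 := le_antisymm (by nlinarith) (by nlinarith)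
    exact hne (by rw [Prod.mk.injEq]; exact ⟨hbz, haz⟩)
end

section
/- Let v_D, v_Q, i_D, i_Q, d and τ be real numbers with τ > 0. Define the 2×2 real matrices 𝓔 = [[v_D, v_Q], [−v_Q, v_D]], 𝓒 = [[i_D, i_Q], [i_Q, −i_D]], 𝓕 = [[v_Q, v_D], [−v_D, v_Q]] (row-major), and D_jd := τ·(d·𝓔 + 𝓒)·𝓕. Then trace(D_jd + D_jdᵀ) = 0, and if (i_D·v_D + i_Q·v_Q, i_D·v_Q − i_Q·v_D) ≠ (0, 0) then D_jd + D_jdᵀ is not positive semidefinite. -/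
open Matrix

theorem stmt_8 (vD vQ iD iQ d τ : ℝ) (hτ : 0 < τ) :
    ((τ • ((d • !![vD, vQ; -vQ, vD] + !![iD, iQ; iQ, -iD]) * !![vQ, vD; -vD, vQ]) +
      (τ • ((d • !![vD, vQ; -vQ, vD] + !![iD, iQ; iQ, -iD]) * !![vQ, vD; -vD, vQ]))ᵀ).trace
        = 0) ∧
    ((iD * vD + iQ * vQ, iD * vQ - iQ * vD) ≠ (0, 0) →
      ¬ (τ • ((d • !![vD, vQ; -vQ, vD] + !![iD, iQ; iQ, -iD]) * !![vQ, vD; -vD, vQ]) +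
        (τ • ((d • !![vD, vQ; -vQ, vD] + !![iD, iQ; iQ, -iD]) * !![vQ, vD; -vD, vQ]))ᵀ).PosSemidef) := by
  set a := iD * vQ - iQ * vD with ha
  set b := iD * vD + iQ * vQ with hb
  have hS : (τ • ((d • !![vD, vQ; -vQ, vD] + !![iD, iQ; iQ, -iD]) * !![vQ, vD; -vD, vQ]) +
        (τ • ((d • !![vD, vQ; -vQ, vD] + !![iD, iQ; iQ, -iD]) * !![vQ, vD; -vD, vQ]))ᵀ)
      = !![2*τ*a, 2*τ*b; 2*τ*b, -(2*τ*a)] := by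
    ext i j
    fin_cases i <;> fin_cases j <;>
      simp [Matrix.mul_apply, Fin.sum_univ_two, Matrix.transpose_apply, Matrix.vecHead, Matrix.vecTail, ha, hb] <;> ring
  rw [hS]
  constructor
  · simp [Matrix.trace_fin_two]
  · rintro hne hpsd
    have h1 := hpsd.dotProduct_mulVec_nonneg ![1, 0]
    have h2 := hpsd.dotProduct_mulVec_nonneg ![0, 1]
    have h3 := hpsd.dotProduct_mulVec_nonneg ![1, 1]
    have h4 := hpsd.dotProduct_mulVec_nonneg ![1, -1]
    simp [dotProduct, Matrix.mulVec, Fin.sum_univ_two] at h1 h2 h3 h4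
    have ha0 : a = 0 := by nlinarith
    have hb0 : b = 0 := by nlinarith
    exact hne (by simp [hb0, ha0])
end

section
/- Let M > 0, D > 0 and a, b, c be real numbers. For every real Ω, define the 2×2 complex matrix J(Ω) = [[1/(M·iΩ + D) + iΩ·a, iΩ·b], [iΩ·b, iΩ·c]]. Then J(Ω) + J(Ω)^H = [[2D/(M²Ω² + D²), 0], [0, 0]], and this matrix is positive semidefinite for every real Ω. -/
open Matrix ComplexOrder

theorem stmt_9 (M D a b c : ℝ) (hM : 0 < M) (hD : 0 < D) :
    ∀ Ω : ℝ,
      (!![1 / ((M : ℂ) * (Complex.I * Ω) + D) + Complex.I * Ω * a, Complex.I * Ω * b;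
           Complex.I * Ω * b, Complex.I * Ω * c] +
        (!![1 / ((M : ℂ) * (Complex.I * Ω) + D) + Complex.I * Ω * a, Complex.I * Ω * b;
           Complex.I * Ω * b, Complex.I * Ω * c])ᴴ
          = !![(2 * D / (M ^ 2 * Ω ^ 2 + D ^ 2) : ℂ), 0; 0, 0]) ∧
      (!![(2 * D / (M ^ 2 * Ω ^ 2 + D ^ 2) : ℂ), 0; 0, 0] :
          Matrix (Fin 2) (Fin 2) ℂ).PosSemidef := by
  intro Ω
  have hden : ((M : ℂ) * (Complex.I * Ω) + D) ≠ 0 := by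
    intro h
    have hre := congrArg Complex.re h
    simp [Complex.add_re, Complex.mul_re] at hre
    exact hD.ne' hre
  have hden' : (-((M : ℂ) * (Complex.I * Ω)) + D) ≠ 0 := by
    intro h
    have hre := congrArg Complex.re h
    simp [Complex.add_re, Complex.mul_re] at hre
    exact hD.ne' hre
  have hden2 : (M : ℝ) ^ 2 * Ω ^ 2 + D ^ 2 ≠ 0 := by positivity
  have hden2c : ((M : ℂ)) ^ 2 * (Ω : ℂ) ^ 2 + (D : ℂ) ^ 2 ≠ 0 := by
    intro h
    apply hden2
    exact_mod_cast (by push_cast at h ⊢; exact_mod_cast h : ((M ^ 2 * Ω ^ 2 + D ^ 2 : ℝ) : ℂ) = 0) |> Complex.ofReal_eq_zero.mp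
  have key : (2 * (D:ℂ) / ((M:ℂ) ^ 2 * (Ω:ℂ) ^ 2 + (D:ℂ) ^ 2)) =
      ((2 * D / (M ^ 2 * Ω ^ 2 + D ^ 2) : ℝ) : ℂ) := by push_cast; ring
  refine ⟨?_, ?_⟩
  · ext i j
    fin_cases i <;> fin_cases j <;>
      simp [Matrix.conjTranspose_apply, Matrix.add_apply, map_add, _root_.map_mul,
        Complex.conj_I]
    · have hprod : ((M : ℂ)) ^ 2 * (Ω : ℂ) ^ 2 + (D : ℂ) ^ 2 =
          ((M : ℂ) * (Complex.I * Ω) + D) * (-((M : ℂ) * (Complex.I * Ω)) + D) := by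
        ring_nf
        rw [Complex.I_sq]
        ring
      rw [eq_div_iff hden2c, hprod]
      have e1 := inv_mul_cancel₀ hden
      have e2 := inv_mul_cancel₀ hden'
      linear_combination (-((M : ℂ) * (Complex.I * Ω)) + D) * e1 + ((M : ℂ) * (Complex.I * Ω) + D) * e2
  · rw [key]
    set r : ℝ := 2 * D / (M ^ 2 * Ω ^ 2 + D ^ 2) with hr
    have hr0 : 0 ≤ r := by positivity
    refine Matrix.posSemidef_iff_dotProduct_mulVec.mpr ⟨?_, ?_⟩
    · show _ᴴ = _
      ext i j
      fin_cases i <;> fin_cases j <;>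
        simp [Matrix.conjTranspose_apply, Complex.conj_ofReal]
    · intro x
      have hq : star x ⬝ᵥ ((!![(r : ℂ), 0; 0, 0] : Matrix (Fin 2) (Fin 2) ℂ) *ᵥ x) =
          ((r : ℂ)) * (Complex.normSq (x 0) : ℝ) := by
        simp [dotProduct, Matrix.mulVec, Fin.sum_univ_two]
        rw [Complex.normSq_eq_conj_mul_self]
        ring
      rw [hq, ← Complex.ofReal_mul, Complex.zero_le_real]
      exact mul_nonneg hr0 (Complex.normSq_nonneg _)
end

section
/- Let k_pf > 0, k_qv > 0 and τ ≥ 0 be real numbers. For every real Ω, define the 2×2 complex matrix N(Ω) = [[1/k_pf, 0], [0, (iΩ)/(k_qv·(1 + iΩτ))]]. Then N(Ω) + N(Ω)^H = [[2/k_pf, 0], [0, 2Ω²τ/(k_qv·(1 + Ω²τ²))]], and this matrix is positive semidefinite for every real Ω. -/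
open Matrix ComplexOrder

theorem stmt_10 (kpf kqv τ : ℝ) (hkpf : 0 < kpf) (hkqv : 0 < kqv) (hτ : 0 ≤ τ) :
    ∀ Ω : ℝ,
      (!![1 / (kpf : ℂ), 0; 0, (Complex.I * Ω) / (kqv * (1 + Complex.I * Ω * τ))] +
        (!![1 / (kpf : ℂ), 0; 0, (Complex.I * Ω) / (kqv * (1 + Complex.I * Ω * τ))])ᴴ
          = !![(2 / kpf : ℂ), 0; 0, (2 * Ω ^ 2 * τ / (kqv * (1 + Ω ^ 2 * τ ^ 2)) : ℂ)]) ∧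
      (!![(2 / kpf : ℂ), 0; 0, (2 * Ω ^ 2 * τ / (kqv * (1 + Ω ^ 2 * τ ^ 2)) : ℂ)] :
          Matrix (Fin 2) (Fin 2) ℂ).PosSemidef := by
  intro Ω
  have hk : (kpf : ℂ) ≠ 0 := by exact_mod_cast hkpf.ne'
  have hq : (kqv : ℂ) ≠ 0 := by exact_mod_cast hkqv.ne'
  have hdenR : (1 : ℝ) + Ω ^ 2 * τ ^ 2 ≠ 0 := by positivity
  have hdenC : (1 : ℂ) + Complex.I * Ω * τ ≠ 0 := by
    intro h
    have := congrArg Complex.re h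
    simp [Complex.add_re, Complex.mul_re] at this
  have hdenC2 : (1 : ℂ) - Complex.I * Ω * τ ≠ 0 := by
    intro h
    have := congrArg Complex.re h
    simp [Complex.sub_re, Complex.mul_re] at this
  constructor
  · ext i j
    fin_cases i <;> fin_cases j <;>
      simp [Matrix.conjTranspose_apply, map_div₀, _root_.map_mul, map_add, Complex.conj_I,
        Complex.conj_ofReal]
    · field_simp
      ring
    · have hdenC2' : (1 : ℂ) + -(Complex.I * Ω * τ) ≠ 0 := by
        simpa [sub_eq_add_neg] using hdenC2
      have hdenRC : (1 : ℂ) + (Ω:ℂ) ^ 2 * (τ:ℂ) ^ 2 ≠ 0 := by exact_mod_cast hdenR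
      field_simp
      ring_nf
      simp [Complex.I_sq]
      ring
  · have : (!![(2 / kpf : ℂ), 0; 0, (2 * Ω ^ 2 * τ / (kqv * (1 + Ω ^ 2 * τ ^ 2)) : ℂ)] :
        Matrix (Fin 2) (Fin 2) ℂ) =
        Matrix.diagonal ![(2 / kpf : ℂ), (2 * Ω ^ 2 * τ / (kqv * (1 + Ω ^ 2 * τ ^ 2)) : ℂ)] := by
      ext i j
      fin_cases i <;> fin_cases j <;> simp [Matrix.diagonal]
    rw [this]
    refine Matrix.posSemidef_diagonal_iff.mpr ?_
    intro i
    fin_cases i <;> simp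
    · rw [Complex.le_def]
      constructor
      · simp
        positivity
      · simp
    · rw [Complex.le_def]
      constructor
      · simp [← Complex.ofReal_pow, ← Complex.ofReal_mul, ← Complex.ofReal_div,
          ← Complex.ofReal_add, ← Complex.ofReal_one]
        positivity
      · simp [← Complex.ofReal_pow, ← Complex.ofReal_mul, ← Complex.ofReal_div,
          ← Complex.ofReal_add, ← Complex.ofReal_one]
end
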